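/- Let φ : M_m(ℂ) → M_n(ℂ) be a positive linear map and let φ* : M_n(ℂ) → M_m(ℂ) be its adjoint with respect to the bilinear pairing ⟨a,b⟩ = Tr(a bᵀ), i.e., Tr(φ(a) bᵀ) = Tr(a φ*(b)ᵀ) for all a ∈ M_m(ℂ) and b ∈ M_n(ℂ). If φ is exposed, then φ* is exposed. -/

import Mathlib

open Matrix ComplexOrder

noncomputable section

/-- A linear map between matrix algebras is positive if it sends positive
semidefinite matrices to positive semidefinite matrices. -/
def IsPosMap {m n : ℕ} (φ : Matrix (Fin m) (Fin m) ℂ →ₗ[ℂ] Matrix (Fin n) (Fin n) ℂ) : Prop :=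
  ∀ a : Matrix (Fin m) (Fin m) ℂ, a.PosSemidef → (φ a).PosSemidef

/-- A positive linear map `φ` is exposed (generates an exposed ray of the cone of
positive maps) if every positive map `ψ` such that `⟨η, φ(a) η⟩ = 0` implies
`⟨η, ψ(a) η⟩ = 0` (for `a` positive semidefinite) is a nonnegative multiple of `φ`. -/
def IsExposedMap {m n : ℕ} (φ : Matrix (Fin m) (Fin m) ℂ →ₗ[ℂ] Matrix (Fin n) (Fin n) ℂ) :
    Prop :=
  IsPosMap φ ∧
    ∀ ψ : Matrix (Fin m) (Fin m) ℂ →ₗ[ℂ] Matrix (Fin n) (Fin n) ℂ, IsPosMap ψ →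
      (∀ a : Matrix (Fin m) (Fin m) ℂ, a.PosSemidef → ∀ η : Fin n → ℂ,
        star η ⬝ᵥ (φ a) *ᵥ η = 0 → star η ⬝ᵥ (ψ a) *ᵥ η = 0) →
      ∃ c : ℝ, 0 ≤ c ∧ ψ = (c : ℂ) • φ

/-- The map `Ad_s : x ↦ s* x s`. -/
def adMap {m n : ℕ} (s : Matrix (Fin m) (Fin n) ℂ) :
    Matrix (Fin m) (Fin m) ℂ →ₗ[ℂ] Matrix (Fin n) (Fin n) ℂ where
  toFun x := sᴴ * x * s
  map_add' x y := by simp [Matrix.add_mul, Matrix.mul_add]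
  map_smul' c x := by simp [Matrix.smul_mul, Matrix.mul_smul]

/-- The transpose map on matrices, as a linear map. -/
def transposeLM (m : ℕ) : Matrix (Fin m) (Fin m) ℂ →ₗ[ℂ] Matrix (Fin m) (Fin m) ℂ where
  toFun x := xᵀ
  map_add' x y := Matrix.transpose_add x y
  map_smul' c x := by simp

namespace AdjExp


variable {k l : ℕ}

lemma trace_mul_transpose (X Y : Matrix (Fin k) (Fin k) ℂ) :
    (X * Yᵀ).trace = ∑ i, ∑ j, X i j * Y i j := by
  simp [Matrix.trace, Matrix.diag, Matrix.mul_apply]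

lemma trace_mul_transpose_comm (X Y : Matrix (Fin k) (Fin k) ℂ) :
    (X * Yᵀ).trace = (Y * Xᵀ).trace := by
  rw [trace_mul_transpose, trace_mul_transpose]
  exact Finset.sum_congr rfl fun i _ => Finset.sum_congr rfl fun j _ => mul_comm _ _

lemma quad_eq_trace (c : Matrix (Fin k) (Fin k) ℂ) (η : Fin k → ℂ) :
    star η ⬝ᵥ c *ᵥ η = (c * (Matrix.vecMulVec (star η) η)ᵀ).trace := by
  rw [trace_mul_transpose]
  simp only [dotProduct, Matrix.mulVec, Matrix.vecMulVec_apply, Pi.star_apply,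
    Finset.mul_sum, Finset.sum_mul]
  exact Finset.sum_congr rfl fun i _ => Finset.sum_congr rfl fun j _ => by ring

lemma vecMulVec_posSemidef (η : Fin k → ℂ) :
    (Matrix.vecMulVec (star η) η).PosSemidef := by
  have h : Matrix.vecMulVec (star η) η = (Matrix.replicateRow Unit η)ᴴ * Matrix.replicateRow Unit η := by
    rw [Matrix.conjTranspose_replicateRow, ← Matrix.vecMulVec_eq]
  rw [h]
  exact Matrix.posSemidef_conjTranspose_mul_self _

lemma posSemidef_sum_vecMulVec {a : Matrix (Fin k) (Fin k) ℂ} (ha : a.PosSemidef) :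
    ∃ v : Fin k → Fin k → ℂ, a = ∑ i, Matrix.vecMulVec (star (v i)) (v i) := by
  obtain ⟨B, rfl⟩ : ∃ B : Matrix (Fin k) (Fin k) ℂ, a = Bᴴ * B := by
    open scoped MatrixOrder in exact CStarAlgebra.nonneg_iff_eq_star_mul_self.mp ha.nonneg
  refine ⟨fun i => B i, ?_⟩
  ext p q
  simp [Matrix.mul_apply, Matrix.sum_apply, Matrix.vecMulVec_apply,
    Matrix.conjTranspose_apply]

lemma trace_nonneg_of_posSemidef {M : Matrix (Fin k) (Fin k) ℂ} (hM : M.PosSemidef) :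
    0 ≤ M.trace := by
  have h : ∀ i, 0 ≤ M i i := by
    intro i
    have := hM.dotProduct_mulVec_nonneg (Pi.single i 1)
    simpa [dotProduct, Matrix.mulVec, Pi.single_apply] using this
  exact Finset.sum_nonneg fun i _ => h i

lemma trace_mul_psd_nonneg {A B : Matrix (Fin k) (Fin k) ℂ}
    (hA : A.PosSemidef) (hB : B.PosSemidef) : 0 ≤ (A * B).trace := by
  obtain ⟨C, rfl⟩ : ∃ C : Matrix (Fin k) (Fin k) ℂ, B = Cᴴ * C := by
    open scoped MatrixOrder in exact CStarAlgebra.nonneg_iff_eq_star_mul_self.mp hB.nonneg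
  have h : (A * (Cᴴ * C)).trace = (C * A * Cᴴ).trace := by
    rw [← Matrix.mul_assoc, Matrix.trace_mul_comm (A * Cᴴ) C, ← Matrix.mul_assoc]
  rw [h]
  exact trace_nonneg_of_posSemidef (hA.mul_mul_conjTranspose_same C)

lemma eq_zero_of_quad_zero {B : Matrix (Fin k) (Fin k) ℂ}
    (h : ∀ x : Fin k → ℂ, star x ⬝ᵥ B *ᵥ x = 0) : B = 0 := by
  have hT : ∀ x : EuclideanSpace ℂ (Fin k), inner ℂ (Matrix.toEuclideanLin B x) x = (0 : ℂ) := by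
    intro x
    set v : Fin k → ℂ := WithLp.equiv 2 _ x with hv
    have h2 : star (star v ⬝ᵥ B *ᵥ v) = 0 := by rw [h v]; simp
    rw [EuclideanSpace.inner_eq_star_dotProduct]
    have h3 : (Matrix.toEuclideanLin B x).ofLp = B *ᵥ v := rfl
    rw [h3, dotProduct_comm]
    show star (B *ᵥ v) ⬝ᵥ v = 0
    calc star (B *ᵥ v) ⬝ᵥ v = star (star v ⬝ᵥ B *ᵥ v) := by
          simp [dotProduct, star_sum, mul_comm]
      _ = 0 := h2
  have := (inner_map_self_eq_zero (Matrix.toEuclideanLin B)).mp hT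
  exact Matrix.toEuclideanLin.map_eq_zero_iff.mp this

lemma star_quad (A : Matrix (Fin k) (Fin k) ℂ) (x : Fin k → ℂ) :
    star (star x ⬝ᵥ A *ᵥ x) = star x ⬝ᵥ Aᴴ *ᵥ x := by
  simp [dotProduct, Matrix.mulVec, Matrix.conjTranspose_apply, star_sum,
    Finset.mul_sum]
  rw [Finset.sum_comm]
  exact Finset.sum_congr rfl fun i _ => Finset.sum_congr rfl fun j _ => by ring

lemma isHermitian_of_quad_nonneg {A : Matrix (Fin k) (Fin k) ℂ}
    (h : ∀ x, 0 ≤ star x ⬝ᵥ A *ᵥ x) : A.IsHermitian := by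
  have key : ∀ x : Fin k → ℂ, star x ⬝ᵥ (A - Aᴴ) *ᵥ x = 0 := by
    intro x
    have h1 : star (star x ⬝ᵥ A *ᵥ x) = star x ⬝ᵥ A *ᵥ x := by
      have := h x
      rw [Complex.nonneg_iff] at this
      exact Complex.ext (by simp) (by simp [← this.2])
    have h2 : star x ⬝ᵥ Aᴴ *ᵥ x = star x ⬝ᵥ A *ᵥ x := by
      rw [← star_quad, h1]
    rw [Matrix.sub_mulVec, dotProduct_sub, h2, sub_self]
  have h0 := sub_eq_zero.mp (eq_zero_of_quad_zero key)
  exact h0.symm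

lemma trace_mul_stdBasis (X : Matrix (Fin k) (Fin k) ℂ) (i j : Fin k) (c : ℂ) :
    (X * (Matrix.single i j c)ᵀ).trace = X i j * c := by
  rw [trace_mul_transpose]
  simp [Matrix.single, mul_ite, ite_and, Finset.sum_ite_eq]

/-- The adjoint of `χ` with respect to the pairing `⟨a, b⟩ = Tr(a bᵀ)`. -/
def dualMap (χ : Matrix (Fin l) (Fin l) ℂ →ₗ[ℂ] Matrix (Fin k) (Fin k) ℂ) :
    Matrix (Fin k) (Fin k) ℂ →ₗ[ℂ] Matrix (Fin l) (Fin l) ℂ where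
  toFun a := Matrix.of fun i j => ∑ p, ∑ q, a p q * χ (Matrix.single i j 1) p q
  map_add' x y := by
    ext i j
    simp [Matrix.add_apply, add_mul, Finset.sum_add_distrib]
  map_smul' c x := by
    ext i j
    simp [Matrix.smul_apply, Finset.mul_sum, mul_assoc]

lemma dualMap_adjoint (χ : Matrix (Fin l) (Fin l) ℂ →ₗ[ℂ] Matrix (Fin k) (Fin k) ℂ)
    (a : Matrix (Fin k) (Fin k) ℂ) (b : Matrix (Fin l) (Fin l) ℂ) :
    (dualMap χ a * bᵀ).trace = (a * (χ b)ᵀ).trace := by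
  suffices h : ∀ (i j : Fin l) (c : ℂ),
      (dualMap χ a * (Matrix.single i j c)ᵀ).trace
        = (a * (χ (Matrix.single i j c))ᵀ).trace by
    conv_lhs => rw [Matrix.matrix_eq_sum_single b]
    conv_rhs => rw [Matrix.matrix_eq_sum_single b]
    simp only [Matrix.transpose_sum, Matrix.mul_sum, Matrix.trace_sum, map_sum, h]
  intro i j c
  rw [trace_mul_stdBasis]
  have hsm : Matrix.single i j c = c • Matrix.single i j (1 : ℂ) := by
    rw [Matrix.smul_single, smul_eq_mul, mul_one]
  rw [hsm, _root_.map_smul, Matrix.transpose_smul, Matrix.mul_smul, Matrix.trace_smul,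
    trace_mul_transpose]
  show (∑ p, ∑ q, a p q * χ (Matrix.single i j 1) p q) * c
      = c • ∑ p, ∑ q, a p q * χ (Matrix.single i j 1) p q
  rw [smul_eq_mul, mul_comm]

lemma eq_of_pairing {X Y : Matrix (Fin k) (Fin k) ℂ}
    (h : ∀ a : Matrix (Fin k) (Fin k) ℂ, (a * Xᵀ).trace = (a * Yᵀ).trace) : X = Y := by
  ext p q
  have h2 := h (Matrix.single p q 1)
  rw [trace_mul_transpose_comm, trace_mul_stdBasis, trace_mul_transpose_comm,
    trace_mul_stdBasis, mul_one, mul_one] at h2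
  exact h2

lemma quad_sum (c : Matrix (Fin k) (Fin k) ℂ) (v : Fin k → Fin k → ℂ) :
    ((∑ i, Matrix.vecMulVec (star (v i)) (v i)) * cᵀ).trace
      = ∑ i, star (v i) ⬝ᵥ c *ᵥ (v i) := by
  rw [Finset.sum_mul, Matrix.trace_sum]
  refine Finset.sum_congr rfl fun i _ => ?_
  rw [quad_eq_trace, trace_mul_transpose_comm]

end AdjExp

/-- If `φ : M_m(ℂ) → M_n(ℂ)` is an exposed positive map and `ψ : M_n(ℂ) → M_m(ℂ)` is
its adjoint with respect to the bilinear pairing `⟨a, b⟩ = Tr(a bᵀ)`, i.e.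
`Tr(φ(a) bᵀ) = Tr(a ψ(b)ᵀ)` for all `a, b`, then `ψ` is exposed. -/
theorem adjoint_isExposed {m n : ℕ}
    (φ : Matrix (Fin m) (Fin m) ℂ →ₗ[ℂ] Matrix (Fin n) (Fin n) ℂ)
    (ψ : Matrix (Fin n) (Fin n) ℂ →ₗ[ℂ] Matrix (Fin m) (Fin m) ℂ)
    (hadj : ∀ (a : Matrix (Fin m) (Fin m) ℂ) (b : Matrix (Fin n) (Fin n) ℂ),
      (φ a * bᵀ).trace = (a * (ψ b)ᵀ).trace)
    (hφ : IsExposedMap φ) :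
    IsExposedMap ψ := by
  obtain ⟨hφpos, hφexp⟩ := hφ
  have hquadψ : ∀ (b : Matrix (Fin n) (Fin n) ℂ) (ξ : Fin m → ℂ),
      star ξ ⬝ᵥ (ψ b) *ᵥ ξ = (φ (Matrix.vecMulVec (star ξ) ξ) * bᵀ).trace := by
    intro b ξ
    rw [AdjExp.quad_eq_trace, AdjExp.trace_mul_transpose_comm, ← hadj]
  have hψpos : IsPosMap ψ := by
    intro b hb
    have hq : ∀ ξ, 0 ≤ star ξ ⬝ᵥ (ψ b) *ᵥ ξ := by
      intro ξ
      rw [hquadψ]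
      exact AdjExp.trace_mul_psd_nonneg (hφpos _ (AdjExp.vecMulVec_posSemidef ξ)) hb.transpose
    exact .of_dotProduct_mulVec_nonneg (AdjExp.isHermitian_of_quad_nonneg hq) hq
  refine ⟨hψpos, ?_⟩
  intro χ hχpos hχzero
  have hχ'adj := AdjExp.dualMap_adjoint χ
  have hquadχ' : ∀ (a : Matrix (Fin m) (Fin m) ℂ) (η : Fin n → ℂ),
      star η ⬝ᵥ (AdjExp.dualMap χ a) *ᵥ η
        = (a * (χ (Matrix.vecMulVec (star η) η))ᵀ).trace := by
    intro a η
    rw [AdjExp.quad_eq_trace, hχ'adj]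
  have hquadφ : ∀ (a : Matrix (Fin m) (Fin m) ℂ) (η : Fin n → ℂ),
      star η ⬝ᵥ (φ a) *ᵥ η = (a * (ψ (Matrix.vecMulVec (star η) η))ᵀ).trace := by
    intro a η
    rw [AdjExp.quad_eq_trace, hadj]
  have hχ'pos : IsPosMap (AdjExp.dualMap χ) := by
    intro a ha
    have hq : ∀ η, 0 ≤ star η ⬝ᵥ (AdjExp.dualMap χ a) *ᵥ η := by
      intro η
      rw [hquadχ']
      exact AdjExp.trace_mul_psd_nonneg ha
        ((hχpos _ (AdjExp.vecMulVec_posSemidef η)).transpose)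
    exact .of_dotProduct_mulVec_nonneg (AdjExp.isHermitian_of_quad_nonneg hq) hq
  have hzero : ∀ a : Matrix (Fin m) (Fin m) ℂ, a.PosSemidef → ∀ η : Fin n → ℂ,
      star η ⬝ᵥ (φ a) *ᵥ η = 0 → star η ⬝ᵥ (AdjExp.dualMap χ a) *ᵥ η = 0 := by
    intro a ha η h0
    obtain ⟨v, rfl⟩ := AdjExp.posSemidef_sum_vecMulVec ha
    set bη := Matrix.vecMulVec (star η) η with hbη
    have hbsd : bη.PosSemidef := AdjExp.vecMulVec_posSemidef η
    rw [hquadφ, AdjExp.quad_sum] at h0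
    have hnn : ∀ i ∈ Finset.univ, (0:ℂ) ≤ star (v i) ⬝ᵥ (ψ bη) *ᵥ (v i) :=
      fun i _ => (hψpos _ hbsd).dotProduct_mulVec_nonneg _
    have heach := (Finset.sum_eq_zero_iff_of_nonneg hnn).mp h0
    rw [hquadχ', AdjExp.quad_sum]
    exact Finset.sum_eq_zero fun i _ =>
      hχzero bη hbsd (v i) (heach i (Finset.mem_univ i))
  obtain ⟨c, hc, hcφ⟩ := hφexp (AdjExp.dualMap χ) hχ'pos hzero
  refine ⟨c, hc, ?_⟩
  apply LinearMap.ext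
  intro b
  apply AdjExp.eq_of_pairing
  intro a
  rw [← hχ'adj, hcφ]
  simp only [LinearMap.smul_apply, Matrix.smul_mul, Matrix.trace_smul,
    Matrix.transpose_smul, Matrix.mul_smul]
  rw [hadj]

end
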